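/- Let D = (E, F) be a proper set system, a, b ∈ E distinct, and A ⊆ E with |A ∩ {a,b}| equal to 0 or 2, and assume D̃_ab is proper. Then the twists of D and of the handle-slid set system D̃_ab by A have equal widths: w(D * A) = w(D̃_ab * A). -/

import Mathlib

open scoped symmDiff

namespace SetSystem

variable {α : Type*} [DecidableEq α]

/-- The family `{F ∪ {a} : F ∪ {b} ∈ 𝓕 and F ⊆ E \ {a,b}}` used in handle sliding. -/
def slideSet (E : Finset α) (a b : α) (𝓕 : Finset (Finset α)) : Finset (Finset α) :=
  ((E \ {a, b}).powerset.filter (fun X => insert b X ∈ 𝓕)).image (fun X => insert a X)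

/-- Handle sliding of `a` over `b`: `𝓕 ∆ {F ∪ {a} : F ∪ {b} ∈ 𝓕, F ⊆ E \ {a,b}}`. -/
def handleSlide (E : Finset α) (a b : α) (𝓕 : Finset (Finset α)) : Finset (Finset α) :=
  𝓕 ∆ slideSet E a b 𝓕

/-- The family `{F ∪ {a,b} : F ∈ 𝓕 and F ⊆ E \ {a,b}}` used in exchanging handle ends. -/
def exchSet (E : Finset α) (a b : α) (𝓕 : Finset (Finset α)) : Finset (Finset α) :=
  ((E \ {a, b}).powerset.filter (fun X => X ∈ 𝓕)).image (fun X => insert a (insert b X))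

/-- Exchanging handle ends of `a` and `b`: `𝓕 ∆ {F ∪ {a,b} : F ∈ 𝓕, F ⊆ E \ {a,b}}`. -/
def exchEnds (E : Finset α) (a b : α) (𝓕 : Finset (Finset α)) : Finset (Finset α) :=
  𝓕 ∆ exchSet E a b 𝓕

/-- The twist of a set system by `A`: feasible sets become `A ∆ X` for `X` feasible. -/
def twist (A : Finset α) (𝓕 : Finset (Finset α)) : Finset (Finset α) :=
  𝓕.image (fun X => A ∆ X)

/-- `r(D_max)`: size of a largest feasible set. -/
def rmax (𝓕 : Finset (Finset α)) : ℕ := 𝓕.sup Finset.card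

/-- `r(D_min)`: size of a smallest feasible set (0 for the empty family). -/
def rmin (𝓕 : Finset (Finset α)) : ℕ := WithTop.untopD 0 ((𝓕.image Finset.card).min)

/-- The width `w(D) = r(D_max) - r(D_min)`. -/
def width (𝓕 : Finset (Finset α)) : ℕ := rmax 𝓕 - rmin 𝓕

/-- The twist polynomial `∂ω_D(z) = Σ_{A ⊆ E} z^{w(D*A)}`. -/
noncomputable def twistPoly (E : Finset α) (𝓕 : Finset (Finset α)) : Polynomial ℤ :=
  ∑ A ∈ E.powerset, Polynomial.X ^ width (twist A 𝓕)

/-- A (proper) delta-matroid: a nonempty family satisfying the symmetric exchange axiom. -/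
def IsDeltaMatroid (𝓕 : Finset (Finset α)) : Prop :=
  𝓕.Nonempty ∧ ∀ X ∈ 𝓕, ∀ Y ∈ 𝓕, ∀ u ∈ X ∆ Y, ∃ v ∈ X ∆ Y, X ∆ ({u, v} : Finset α) ∈ 𝓕

/-- A set system on ground set `E` is binary if some twist of it equals `D(C)` for a
symmetric matrix `C` over `GF(2)` indexed by `E`: the feasible sets of `D(C)` are those
`B ⊆ E` whose principal submatrix `C[B]` is nonsingular (with `C[∅]` nonsingular). -/
def IsBinary (E : Finset α) (𝓕 : Finset (Finset α)) : Prop :=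
  ∃ A ⊆ E, ∃ C : α → α → ZMod 2, (∀ i j, C i j = C j i) ∧
    ∀ B : Finset α, B ∈ twist A 𝓕 ↔
      B ⊆ E ∧ (Matrix.of fun i j : ↥B => C i.1 j.1).det ≠ 0

/-- `e` is a loop: it lies in no feasible set. -/
def IsLoop (𝓕 : Finset (Finset α)) (e : α) : Prop := ∀ X ∈ 𝓕, e ∉ X

/-- `e` is a coloop: it lies in every feasible set. -/
def IsColoop (𝓕 : Finset (Finset α)) (e : α) : Prop := ∀ X ∈ 𝓕, e ∈ X

/-- Deletion of `e` (acting on the feasible family). -/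
def deleteElem (𝓕 : Finset (Finset α)) (e : α) : Finset (Finset α) :=
  if ∀ X ∈ 𝓕, e ∈ X then 𝓕.image (fun X => X.erase e)
  else 𝓕.filter (fun X => e ∉ X)

/-- Contraction of `e`: `D / e = (D * {e}) \ e`. -/
def contractElem (𝓕 : Finset (Finset α)) (e : α) : Finset (Finset α) :=
  deleteElem (twist {e} 𝓕) e


lemma insert_eq_symmDiff_aux {c : α} {F : Finset α} (hcF : c ∉ F) :
    insert c F = F ∆ ({c} : Finset α) := by
  rw [symmDiff_def]
  ext x
  simp only [Finset.sup_eq_union, Finset.mem_insert, Finset.mem_union, Finset.mem_sdiff,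
    Finset.mem_singleton]
  constructor
  · rintro (rfl | hx)
    · exact Or.inr ⟨rfl, fun h => hcF h⟩
    · exact Or.inl ⟨hx, fun h => hcF (h ▸ hx)⟩
  · rintro (⟨hx, _⟩ | ⟨rfl, _⟩)
    · exact Or.inr hx
    · exact Or.inl rfl

lemma card_symmDiff_insert_aux (A : Finset α) {c : α} {F : Finset α} (hcF : c ∉ F) :
    (A ∆ insert c F).card = if c ∈ A then (A ∆ F).card - 1 else (A ∆ F).card + 1 := by
  rw [insert_eq_symmDiff_aux hcF, ← symmDiff_assoc]
  have hmem : c ∈ A ∆ F ↔ c ∈ A := by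
    simp [Finset.mem_symmDiff, hcF]
  by_cases hc : c ∈ A
  · have hc' : c ∈ A ∆ F := hmem.mpr hc
    have : (A ∆ F) ∆ ({c} : Finset α) = (A ∆ F).erase c := by
      rw [symmDiff_def]
      ext x
      simp only [Finset.sup_eq_union, Finset.mem_union, Finset.mem_sdiff,
        Finset.mem_singleton, Finset.mem_erase]
      constructor
      · rintro (⟨hx, hxc⟩ | ⟨rfl, h⟩)
        · exact ⟨hxc, hx⟩
        · exact absurd hc' h
      · rintro ⟨hxc, hx⟩; exact Or.inl ⟨hx, hxc⟩
    rw [this, if_pos hc, Finset.card_erase_of_mem hc']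
  · have hc' : c ∉ A ∆ F := fun h => hc (hmem.mp h)
    have : (A ∆ F) ∆ ({c} : Finset α) = insert c (A ∆ F) := by
      rw [symmDiff_def]
      ext x
      simp only [Finset.sup_eq_union, Finset.mem_union, Finset.mem_sdiff,
        Finset.mem_singleton, Finset.mem_insert]
      constructor
      · rintro (⟨hx, _⟩ | ⟨rfl, _⟩)
        · exact Or.inr hx
        · exact Or.inl rfl
      · rintro (rfl | hx)
        · exact Or.inr ⟨rfl, hc'⟩
        · exact Or.inl ⟨hx, fun h => hc' (h ▸ hx)⟩
    rw [this, if_neg hc, Finset.card_insert_of_notMem hc']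

lemma card_symmDiff_insert_eq_aux (A : Finset α) {a b : α} {F : Finset α}
    (haF : a ∉ F) (hbF : b ∉ F) (hiff : a ∈ A ↔ b ∈ A) :
    (A ∆ insert a F).card = (A ∆ insert b F).card := by
  rw [card_symmDiff_insert_aux A haF, card_symmDiff_insert_aux A hbF]
  by_cases h : a ∈ A
  · rw [if_pos h, if_pos (hiff.mp h)]
  · rw [if_neg h, if_neg (fun hb' => h (hiff.mpr hb'))]

lemma image_card_twist_handleSlide (E : Finset α) (𝓕 : Finset (Finset α))
    (a b : α) (hab : a ≠ b) (A : Finset α) (hiff : a ∈ A ↔ b ∈ A) :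
    (twist A 𝓕).image Finset.card
      = (twist A (handleSlide E a b 𝓕)).image Finset.card := by
  have hS : ∀ X ∈ slideSet E a b 𝓕, ∃ F : Finset α,
      a ∉ F ∧ b ∉ F ∧ insert b F ∈ 𝓕 ∧ X = insert a F := by
    intro X hX
    simp only [slideSet, Finset.mem_image, Finset.mem_filter, Finset.mem_powerset] at hX
    obtain ⟨F, ⟨hFE, hFb⟩, rfl⟩ := hX
    have haF : a ∉ F := fun h => by
      have := hFE h; simp at this
    have hbF : b ∉ F := fun h => by
      have := hFE h; simp at this
    exact ⟨F, haF, hbF, hFb, rfl⟩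
  apply Finset.Subset.antisymm
  · intro n hn
    simp only [twist, Finset.image_image, Finset.mem_image, Function.comp] at hn ⊢
    obtain ⟨X, hX, rfl⟩ := hn
    by_cases hXS : X ∈ slideSet E a b 𝓕
    · obtain ⟨F, haF, hbF, hFb, rfl⟩ := hS X hXS
      refine ⟨insert b F, ?_, (card_symmDiff_insert_eq_aux A haF hbF hiff).symm⟩
      have hbS : insert b F ∉ slideSet E a b 𝓕 := by
        intro h
        obtain ⟨G, haG, _, _, hEq⟩ := hS _ h
        have : a ∈ insert b F := hEq ▸ Finset.mem_insert_self a G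
        simp only [Finset.mem_insert] at this
        exact this.elim hab haF
      exact Finset.mem_symmDiff.mpr (Or.inl ⟨hFb, hbS⟩)
    · exact ⟨X, Finset.mem_symmDiff.mpr (Or.inl ⟨hX, hXS⟩), rfl⟩
  · intro n hn
    simp only [twist, Finset.image_image, Finset.mem_image, Function.comp] at hn ⊢
    obtain ⟨X, hX, rfl⟩ := hn
    rcases Finset.mem_symmDiff.mp hX with ⟨hX𝓕, _⟩ | ⟨hXS, _⟩
    · exact ⟨X, hX𝓕, rfl⟩
    · obtain ⟨F, haF, hbF, hFb, rfl⟩ := hS X hXS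
      exact ⟨insert b F, hFb, card_symmDiff_insert_eq_aux A hbF haF hiff.symm⟩

lemma width_eq_of_image_card_eq {𝓕 𝓖 : Finset (Finset α)}
    (h : 𝓕.image Finset.card = 𝓖.image Finset.card) : width 𝓕 = width 𝓖 := by
  have hmax : rmax 𝓕 = rmax 𝓖 := by
    have e : ∀ 𝓗 : Finset (Finset α), 𝓗.sup Finset.card = (𝓗.image Finset.card).sup id := by
      intro 𝓗; rw [Finset.sup_image]; rfl
    unfold rmax
    rw [e, e, h]
  have hmin : rmin 𝓕 = rmin 𝓖 := by
    unfold rmin; rw [h]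
  unfold width; rw [hmax, hmin]

/-- If `|A ∩ {a,b}|` is `0` or `2`, then twisting by `A` gives equal widths
for `D` and the handle-slid system `D̃_ab`. -/
theorem width_twist_handleSlide (E : Finset α) (𝓕 : Finset (Finset α))
    (h𝓕 : ∀ X ∈ 𝓕, X ⊆ E) (hprop : 𝓕.Nonempty)
    (a b : α) (ha : a ∈ E) (hb : b ∈ E) (hab : a ≠ b)
    (hprop' : (handleSlide E a b 𝓕).Nonempty)
    (A : Finset α) (hA : A ⊆ E)
    (hcard : (A ∩ {a, b}).card = 0 ∨ (A ∩ {a, b}).card = 2) :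
    width (twist A 𝓕) = width (twist A (handleSlide E a b 𝓕)) := by
  have hiff : a ∈ A ↔ b ∈ A := by
    rcases hcard with h | h
    · rw [Finset.card_eq_zero] at h
      have ha' : a ∉ A := fun hm => by
        have : a ∈ A ∩ {a, b} := Finset.mem_inter.mpr ⟨hm, by simp⟩
        rw [h] at this; exact absurd this (Finset.notMem_empty a)
      have hb' : b ∉ A := fun hm => by
        have : b ∈ A ∩ {a, b} := Finset.mem_inter.mpr ⟨hm, by simp⟩
        rw [h] at this; exact absurd this (Finset.notMem_empty b)
      simp [ha', hb']
    · have hsub : A ∩ {a, b} ⊆ {a, b} := Finset.inter_subset_right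
      have hcard2 : ({a, b} : Finset α).card = 2 := by
        rw [Finset.card_insert_of_notMem (by simp [hab]), Finset.card_singleton]
      have heq : A ∩ {a, b} = {a, b} :=
        Finset.eq_of_subset_of_card_le hsub (by rw [h, hcard2])
      have ha' : a ∈ A := (Finset.mem_inter.mp (heq ▸ (by simp : a ∈ ({a, b} : Finset α)))).1
      have hb' : b ∈ A := (Finset.mem_inter.mp (heq ▸ (by simp : b ∈ ({a, b} : Finset α)))).1
      simp [ha', hb']
  exact width_eq_of_image_card_eq (image_card_twist_handleSlide E 𝓕 a b hab A hiff)

end SetSystem
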